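/- arXiv:1006.0525 — 2 statements merged into one kernel-verified Lean document; each statement's English description precedes it below -/
import Mathlib

section
/- Let G be a topological group acting continuously on topological spaces Z and Z', let H ⊆ G be a closed subgroup, and suppose U₀ = G/H as a G-space. Then the category of G-equivariant continuous maps Z → G/H is equivalent to the category of H-spaces, via Z ↦ φ⁻¹(eH) where φ : Z → G/H is the structure map, provided G → G/H admits local sections. -/
set_option linter.unusedSectionVars false

namespace Stmt15Aux

variable {G : Type*} [TopologicalSpace G] [Group G] [IsTopologicalGroup G]
  {H : Subgroup G}
  {Z Z' : Type*} [TopologicalSpace Z] [TopologicalSpace Z']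
  [MulAction G Z] [ContinuousSMul G Z] [MulAction G Z'] [ContinuousSMul G Z']
  {φ : Z → G ⧸ H} {φ' : Z' → G ⧸ H}

theorem mem_fiber (hφe : ∀ (g : G) (z : Z), φ (g • z) = g • φ z)
    {g : G} {z : Z} (hg : (QuotientGroup.mk g : G ⧸ H) = φ z) :
    g⁻¹ • z ∈ φ ⁻¹' {((1 : G) : G ⧸ H)} := by
  have : φ (g⁻¹ • z) = g⁻¹ • φ z := hφe g⁻¹ z
  simp only [Set.mem_preimage, Set.mem_singleton_iff, this, ← hg]
  show (QuotientGroup.mk (g⁻¹ * g) : G ⧸ H) = QuotientGroup.mk 1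
  rw [inv_mul_cancel]

/-- Extension of a map on fibers to a `G`-equivariant map. -/
noncomputable def ext (hφe : ∀ (g : G) (z : Z), φ (g • z) = g • φ z)
    (f : (φ ⁻¹' {((1 : G) : G ⧸ H)}) → (φ' ⁻¹' {((1 : G) : G ⧸ H)})) (z : Z) : Z' :=
  (φ z).out • (f ⟨(φ z).out⁻¹ • z, mem_fiber hφe (QuotientGroup.out_eq' _)⟩ : Z')

theorem ext_eq (hφe : ∀ (g : G) (z : Z), φ (g • z) = g • φ z)
    (f : (φ ⁻¹' {((1 : G) : G ⧸ H)}) → (φ' ⁻¹' {((1 : G) : G ⧸ H)}))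
    (hf : ∀ (h : H) (z w : (φ ⁻¹' {((1 : G) : G ⧸ H)})), (w : Z) = (h : G) • (z : Z) →
      ((f w : Z') = (h : G) • (f z : Z')))
    (z : Z) (g : G) (hg : (QuotientGroup.mk g : G ⧸ H) = φ z) :
    ext hφe f z = g • (f ⟨g⁻¹ • z, mem_fiber hφe hg⟩ : Z') := by
  set g0 := (φ z).out with hg0def
  have hg0 : (QuotientGroup.mk g0 : G ⧸ H) = φ z := QuotientGroup.out_eq' _
  have hmem : g0⁻¹ * g ∈ H := by
    rw [← QuotientGroup.eq]
    rw [hg0, hg]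
  have key : (f ⟨g0⁻¹ • z, mem_fiber hφe hg0⟩ : Z') =
      (g0⁻¹ * g) • (f ⟨g⁻¹ • z, mem_fiber hφe hg⟩ : Z') := by
    apply hf ⟨g0⁻¹ * g, hmem⟩
    show g0⁻¹ • z = (g0⁻¹ * g) • (g⁻¹ • z)
    rw [smul_smul]
    congr 1
    group
  show g0 • (f ⟨g0⁻¹ • z, mem_fiber hφe hg0⟩ : Z') = _
  rw [key, smul_smul]
  congr 1
  group

theorem ext_equivariant (hφe : ∀ (g : G) (z : Z), φ (g • z) = g • φ z)
    (f : (φ ⁻¹' {((1 : G) : G ⧸ H)}) → (φ' ⁻¹' {((1 : G) : G ⧸ H)}))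
    (hf : ∀ (h : H) (z w : (φ ⁻¹' {((1 : G) : G ⧸ H)})), (w : Z) = (h : G) • (z : Z) →
      ((f w : Z') = (h : G) • (f z : Z')))
    (g : G) (z : Z) : ext hφe f (g • z) = g • ext hφe f z := by
  have hg1 : (QuotientGroup.mk (g * (φ z).out) : G ⧸ H) = φ (g • z) := by
    rw [hφe]
    show g • (QuotientGroup.mk (φ z).out : G ⧸ H) = _
    rw [QuotientGroup.out_eq']
  have harg : (⟨(g * (φ z).out)⁻¹ • (g • z), mem_fiber hφe hg1⟩ :
      (φ ⁻¹' {((1 : G) : G ⧸ H)})) =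
      ⟨(φ z).out⁻¹ • z, mem_fiber hφe (QuotientGroup.out_eq' _)⟩ := by
    apply Subtype.ext
    show (g * (φ z).out)⁻¹ • (g • z) = (φ z).out⁻¹ • z
    rw [smul_smul]
    congr 1
    group
  rw [ext_eq hφe f hf (g • z) (g * (φ z).out) hg1,
      ext_eq hφe f hf z (φ z).out (QuotientGroup.out_eq' _), harg, mul_smul]

theorem ext_over (hφe : ∀ (g : G) (z : Z), φ (g • z) = g • φ z)
    (hφ'e : ∀ (g : G) (z : Z'), φ' (g • z) = g • φ' z)
    (f : (φ ⁻¹' {((1 : G) : G ⧸ H)}) → (φ' ⁻¹' {((1 : G) : G ⧸ H)}))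
    (z : Z) : φ' (ext hφe f z) = φ z := by
  have hmem : φ' ((f ⟨(φ z).out⁻¹ • z, mem_fiber hφe (QuotientGroup.out_eq' _)⟩ : Z'))
      = ((1 : G) : G ⧸ H) := (f _).2
  show φ' ((φ z).out • _) = φ z
  rw [hφ'e, hmem]
  show (QuotientGroup.mk ((φ z).out * 1) : G ⧸ H) = φ z
  rw [mul_one, QuotientGroup.out_eq']

theorem ext_continuous (hφc : Continuous φ)
    (hφe : ∀ (g : G) (z : Z), φ (g • z) = g • φ z)
    (hsec : ∀ p : G ⧸ H, ∃ U : Set (G ⧸ H), IsOpen U ∧ p ∈ U ∧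
      ∃ s : U → G, Continuous s ∧ ∀ y : U, QuotientGroup.mk (s y) = (y : G ⧸ H))
    (f : (φ ⁻¹' {((1 : G) : G ⧸ H)}) → (φ' ⁻¹' {((1 : G) : G ⧸ H)}))
    (hfc : Continuous f)
    (hf : ∀ (h : H) (z w : (φ ⁻¹' {((1 : G) : G ⧸ H)})), (w : Z) = (h : G) • (z : Z) →
      ((f w : Z') = (h : G) • (f z : Z'))) :
    Continuous (ext hφe f) := by
  rw [continuous_iff_continuousAt]
  intro z0
  obtain ⟨U, hU, hpU, s, hs, hss⟩ := hsec (φ z0)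
  have hV : IsOpen (φ ⁻¹' U) := hU.preimage hφc
  apply ContinuousOn.continuousAt _ (hV.mem_nhds hpU)
  rw [continuousOn_iff_continuous_restrict]
  have cs : Continuous fun z : φ ⁻¹' U => s ⟨φ z, z.2⟩ :=
    hs.comp ((hφc.comp continuous_subtype_val).subtype_mk _)
  have carg : Continuous fun z : φ ⁻¹' U =>
      (⟨(s ⟨φ z, z.2⟩)⁻¹ • (z : Z), mem_fiber hφe (hss _)⟩ :
        (φ ⁻¹' {((1 : G) : G ⧸ H)})) :=
    Continuous.subtype_mk (cs.inv.smul continuous_subtype_val) _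
  have cmain : Continuous fun z : φ ⁻¹' U =>
      s ⟨φ z, z.2⟩ • ((f ⟨(s ⟨φ z, z.2⟩)⁻¹ • (z : Z), mem_fiber hφe (hss _)⟩ : Z')) :=
    cs.smul (continuous_subtype_val.comp (hfc.comp carg))
  apply cmain.congr
  intro z
  exact (ext_eq hφe f hf z _ (hss _)).symm

end Stmt15Aux

/-- Let `G` be a topological group and `H ⊆ G` a closed subgroup such that
`G → G/H` admits local sections.  For `G`-spaces `Z, Z'` equipped with continuous
equivariant maps `φ : Z → G/H`, `φ' : Z' → G/H`, the `G`-equivariant continuous maps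
`Z → Z'` over `G/H` correspond bijectively to the `H`-equivariant continuous maps
between the fibers over the identity coset.  (This is the equivalence between
`G`-spaces over `G/H` and `H`-spaces, `Z ↦ φ⁻¹(eH)`.) -/
theorem stmt15 {G : Type*} [TopologicalSpace G] [Group G] [IsTopologicalGroup G]
    (H : Subgroup G) (hH : IsClosed (H : Set G))
    (hsec : ∀ p : G ⧸ H, ∃ U : Set (G ⧸ H), IsOpen U ∧ p ∈ U ∧
      ∃ s : U → G, Continuous s ∧ ∀ y : U, QuotientGroup.mk (s y) = (y : G ⧸ H))
    {Z Z' : Type*} [TopologicalSpace Z] [TopologicalSpace Z']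
    [MulAction G Z] [ContinuousSMul G Z] [MulAction G Z'] [ContinuousSMul G Z']
    (φ : Z → G ⧸ H) (hφc : Continuous φ) (hφe : ∀ (g : G) (z : Z), φ (g • z) = g • φ z)
    (φ' : Z' → G ⧸ H) (hφ'c : Continuous φ') (hφ'e : ∀ (g : G) (z : Z'), φ' (g • z) = g • φ' z) :
    ∃ e : {f : Z → Z' // Continuous f ∧ (∀ (g : G) (z : Z), f (g • z) = g • f z) ∧
          ∀ z : Z, φ' (f z) = φ z} ≃
        {f : (φ ⁻¹' {((1 : G) : G ⧸ H)}) → (φ' ⁻¹' {((1 : G) : G ⧸ H)}) // Continuous f ∧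
          ∀ (h : H) (z w : (φ ⁻¹' {((1 : G) : G ⧸ H)})), (w : Z) = (h : G) • (z : Z) →
            ((f w : Z') = (h : G) • (f z : Z'))},
      ∀ (f : {f : Z → Z' // Continuous f ∧ (∀ (g : G) (z : Z), f (g • z) = g • f z) ∧
          ∀ z : Z, φ' (f z) = φ z}) (z : (φ ⁻¹' {((1 : G) : G ⧸ H)})),
        ((e f).1 z : Z') = f.1 (z : Z) := by
  classical
  open Stmt15Aux in
  refine ⟨{
    toFun := fun f => ⟨fun z => ⟨f.1 z, by
      simp only [Set.mem_preimage, Set.mem_singleton_iff, f.2.2.2]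
      exact z.2⟩, ?_, ?_⟩
    invFun := fun f => ⟨ext hφe f.1, ext_continuous hφc hφe hsec f.1 f.2.1 f.2.2,
      ext_equivariant hφe f.1 f.2.2, ext_over hφe hφ'e f.1⟩
    left_inv := ?_
    right_inv := ?_ }, fun f z => rfl⟩
  · exact (f.2.1.comp continuous_subtype_val).subtype_mk _
  · intro h z w hw
    show f.1 (w : Z) = (h : G) • f.1 (z : Z)
    rw [hw, f.2.2.1]
  · intro f
    apply Subtype.ext
    funext z
    show ext hφe _ z = f.1 z
    rw [ext_eq hφe _ (by
      intro h z w hw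
      show f.1 (w : Z) = (h : G) • f.1 (z : Z)
      rw [hw, f.2.2.1]) z (φ z).out (QuotientGroup.out_eq' _)]
    show (φ z).out • f.1 ((φ z).out⁻¹ • z) = f.1 z
    rw [← f.2.2.1, smul_inv_smul]
  · intro f
    apply Subtype.ext
    funext z
    apply Subtype.ext
    show ext hφe f.1 (z : Z) = (f.1 z : Z')
    have hz : (QuotientGroup.mk (1 : G) : G ⧸ H) = φ (z : Z) := z.2.symm
    have harg : (⟨(1 : G)⁻¹ • (z : Z), mem_fiber hφe hz⟩ :
        (φ ⁻¹' {((1 : G) : G ⧸ H)})) = z := by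
      apply Subtype.ext
      show (1 : G)⁻¹ • (z : Z) = (z : Z)
      rw [inv_one, one_smul]
    rw [ext_eq hφe f.1 f.2.2 (z : Z) 1 hz, harg, one_smul]
end

section
/- Let 0 → ℤ → ℝ → 𝕊¹ → 0 be the standard exact sequence of topological abelian groups and let C be a locally compact abelian topological group with maximal compact subgroup C¹ = ker(|·| : C → ℝ₊^×), such that C ≅ C¹ × ℝ topologically. Then the connecting map in continuous-homomorphism groups yields an isomorphism Hom_cont(C, 𝕊¹)/image(Hom_cont(C, ℝ)) ≅ (C¹)^D, the Pontryagin dual of C¹. -/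
/-- The projection `ℝ → 𝕊¹ = ℝ/ℤ` as a continuous additive homomorphism. -/
noncomputable def realToCircle : ContinuousAddMonoidHom ℝ (AddCircle (1 : ℝ)) :=
  ⟨QuotientAddGroup.mk' (AddSubgroup.zmultiples (1 : ℝ)), continuous_quotient_mk'⟩

/-- Post-composition with `ℝ → 𝕊¹`, as a homomorphism
`Hom_cont(C, ℝ) →+ Hom_cont(C, 𝕊¹)`. -/
noncomputable def pushToCircle (C : Type*) [TopologicalSpace C] [AddCommGroup C]
    [IsTopologicalAddGroup C] :
    ContinuousAddMonoidHom C ℝ →+ ContinuousAddMonoidHom C (AddCircle (1 : ℝ)) where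
  toFun g := realToCircle.comp g
  map_zero' := by ext x; exact map_zero realToCircle
  map_add' a b := by ext x; exact map_add realToCircle (a x) (b x)

/-- The inclusion of an additive subgroup, as a continuous additive homomorphism. -/
def subInclusion {C : Type*} [TopologicalSpace C] [AddCommGroup C]
    [IsTopologicalAddGroup C] (C1 : AddSubgroup C) : ContinuousAddMonoidHom C1 C :=
  ⟨C1.subtype, continuous_subtype_val⟩


lemma realToCircle_coe (r : ℝ) : realToCircle r = (r : AddCircle (1:ℝ)) := rfl

lemma coe_eq_zero_iff' (r : ℝ) : ((r : ℝ) : AddCircle (1:ℝ)) = 0 ↔ ∃ n : ℤ, r = n := by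
  rw [QuotientAddGroup.eq_zero_iff]
  constructor
  · rintro ⟨k, rfl⟩; exact ⟨k, by simp⟩
  · rintro ⟨n, rfl⟩; exact ⟨n, by simp⟩


lemma coe_eq_coe_iff' (r s : ℝ) : ((r:ℝ) : AddCircle (1:ℝ)) = ((s:ℝ) : AddCircle (1:ℝ)) ↔ ∃ n : ℤ, r - s = n := by
  rw [QuotientAddGroup.eq_iff_sub_mem]
  constructor
  · rintro ⟨k, hk⟩; exact ⟨k, by simpa using hk.symm⟩
  · rintro ⟨n, hn⟩; exact ⟨n, by simp [hn]⟩

lemma int_small {n : ℤ} (h : |(n:ℝ)| < 1) : n = 0 := by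
  have : |n| < 1 := by exact_mod_cast h
  exact Int.abs_lt_one_iff.1 this

open Set in
lemma exists_lift (h : ContinuousAddMonoidHom ℝ (AddCircle (1:ℝ))) :
    ∃ G : ContinuousAddMonoidHom ℝ ℝ, ∀ t, realToCircle (G t) = h t := by
  haveI : Fact ((0:ℝ) < 1) := ⟨one_pos⟩
  set a : ℝ := -(1/2) with ha
  set F : AddCircle (1:ℝ) → ℝ := fun x => ((AddCircle.equivIoc 1 a x : ℝ)) with hF
  have hFmem : ∀ x, F x ∈ Ioc a (a + 1) := fun x => (AddCircle.equivIoc 1 a x).2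
  have hFcoe : ∀ x, ((F x : ℝ) : AddCircle (1:ℝ)) = x := by
    intro x
    exact (AddCircle.equivIoc 1 a).symm_apply_apply x
  set φ : ℝ → ℝ := fun t => F (h t) with hφ
  have hφcoe : ∀ t, ((φ t : ℝ) : AddCircle (1:ℝ)) = h t := fun t => hFcoe (h t)
  -- h 0 = 0 and 0 ≠ ↑a
  have hzero_ne : (0 : AddCircle (1:ℝ)) ≠ (a : AddCircle (1:ℝ)) := by
    intro hcon
    have h1 : ((a:ℝ) : AddCircle (1:ℝ)) = ((0:ℝ) : AddCircle (1:ℝ)) := by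
      rw [← hcon]; norm_cast
    obtain ⟨n, hn⟩ := (coe_eq_coe_iff' a 0).mp h1
    have h2 : (2:ℝ) * n = -1 := by rw [sub_zero] at hn; rw [← hn, ha]; ring
    have h3 : (2 * n : ℤ) = -1 := by exact_mod_cast h2
    omega
  have hφ0 : φ 0 = 0 := by
    have h1 : ((φ 0 : ℝ) : AddCircle (1:ℝ)) = 0 := by rw [hφcoe]; exact map_zero h
    obtain ⟨n, hn⟩ := (coe_eq_zero_iff' _).mp h1
    have hm := hFmem (h 0)
    rw [show F (h 0) = φ 0 from rfl, hn] at hm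
    have h2 : -(1/2 : ℝ) < n := hm.1
    have h3 : (n:ℝ) ≤ -(1/2) + 1 := hm.2
    have : n = 0 := by
      have : (-1 : ℝ) < 2 * n := by linarith
      have h4 : (2 * n : ℝ) ≤ 1 := by linarith
      have h5 : (-1 : ℤ) < 2 * n := by exact_mod_cast this
      have h6 : (2 * n : ℤ) ≤ 1 := by exact_mod_cast h4
      omega
    rw [hn, this]; norm_num
  -- continuity of φ where h t ≠ ↑a
  have hφcont : ∀ t : ℝ, h t ≠ (a : AddCircle (1:ℝ)) → ContinuousAt φ t := by
    intro t ht
    exact (continuous_subtype_val.continuousAt.comp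
      (AddCircle.continuousAt_equivIoc 1 a ht)).comp (map_continuous h).continuousAt
  have hφcont0 : ContinuousAt φ 0 := by
    apply hφcont
    rw [map_zero h]; exact hzero_ne
  -- pick δ
  have : ∀ᶠ t in nhds (0:ℝ), |φ t| < 1/4 := by
    have := hφcont0.eventually_mem (Metric.ball_mem_nhds (φ 0) (by norm_num : (0:ℝ) < 1/4))
    filter_upwards [this] with t ht
    simpa [hφ0, Real.dist_eq] using ht
  obtain ⟨δ, hδpos, hδ⟩ := Metric.eventually_nhds_iff_ball.mp this
  have hsmall : ∀ t : ℝ, |t| < δ → |φ t| < 1/4 := by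
    intro t ht; exact hδ t (by simpa [Real.dist_eq] using ht)
  -- smallness implies h t ≠ ↑a there
  have hne : ∀ t : ℝ, |t| < δ → h t ≠ (a : AddCircle (1:ℝ)) := by
    intro t ht hcon
    have h1 : ((φ t :ℝ) : AddCircle (1:ℝ)) = ((a:ℝ) : AddCircle (1:ℝ)) := by
      rw [hφcoe]; exact hcon
    obtain ⟨n, hn⟩ := (coe_eq_coe_iff' _ _).mp h1
    have h2 := hsmall t ht
    have h3 : |(n:ℝ)| < 1 := by
      rw [← hn, ha]; rw [abs_lt] at h2 ⊢; constructor <;> [linarith [h2.1]; linarith [h2.2]]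
    have hn0 : n = 0 := int_small h3
    rw [hn0, Int.cast_zero, sub_eq_zero, ha] at hn
    rw [abs_lt] at h2
    linarith [h2.1]
  -- local additivity
  have hadd : ∀ s t : ℝ, |s| < δ → |t| < δ → |s + t| < δ → φ (s + t) = φ s + φ t := by
    intro s t hs ht hst
    have h1 : ((φ (s+t) : ℝ) : AddCircle (1:ℝ)) = ((φ s + φ t : ℝ) : AddCircle (1:ℝ)) := by
      have : ((φ s + φ t : ℝ) : AddCircle (1:ℝ)) = ((φ s : ℝ) : AddCircle (1:ℝ)) + ((φ t : ℝ) : AddCircle (1:ℝ)) := by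
        norm_cast
      rw [hφcoe, this, hφcoe, hφcoe, ← map_add]
    obtain ⟨n, hn⟩ := (coe_eq_coe_iff' _ _).mp h1
    have h2 : |(n:ℝ)| < 1 := by
      rw [← hn]
      have := hsmall _ hs; have := hsmall _ ht; have := hsmall _ hst
      rw [abs_lt] at *
      constructor <;> [linarith; linarith]
    have hn0 : n = 0 := int_small h2
    rw [hn0, Int.cast_zero, sub_eq_zero] at hn
    exact hn
  -- scaling
  have hscale : ∀ (k : ℕ) (s : ℝ), |(k:ℝ) * s| < δ → |s| < δ → φ ((k:ℝ) * s) = k * φ s := by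
    intro k
    induction k with
    | zero => intro s _ _; simpa using hφ0
    | succ m ih =>
      intro s hks hs
      have hm : |(m:ℝ) * s| ≤ |((m:ℝ)+1) * s| := by
        rw [abs_mul, abs_mul]
        have h0 : |(m:ℝ)| ≤ |(m:ℝ)+1| := by
          rw [abs_of_nonneg (by positivity : (0:ℝ) ≤ (m:ℝ)),
            abs_of_nonneg (by positivity : (0:ℝ) ≤ (m:ℝ)+1)]; linarith
        exact mul_le_mul_of_nonneg_right h0 (abs_nonneg s)
      have hks' : |((m:ℝ)+1) * s| < δ := by push_cast at hks; exact hks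
      have h1 : ((m:ℝ)+1) * s = (m:ℝ) * s + s := by ring
      have h2 := hadd ((m:ℝ)*s) s (lt_of_le_of_lt hm hks') hs (by rw [← h1]; exact hks')
      push_cast
      rw [h1, h2, ih s (lt_of_le_of_lt hm hks') hs]
      ring
  -- existence of N
  have hex : ∀ t : ℝ, ∃ N : ℕ, 0 < N ∧ |t| < (N:ℝ) * δ := by
    intro t
    obtain ⟨N, hN⟩ := exists_nat_gt (|t| / δ)
    refine ⟨N + 1, Nat.succ_pos N, ?_⟩
    have : |t| / δ < (N:ℝ) + 1 := by push_cast; linarith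
    calc |t| = (|t| / δ) * δ := by field_simp
      _ < ((N:ℝ) + 1) * δ := mul_lt_mul_of_pos_right this hδpos
      _ = ((N + 1 : ℕ):ℝ) * δ := by push_cast; ring
  -- well-definedness
  have wd : ∀ (t : ℝ) (N M : ℕ), 0 < N → 0 < M → |t| < (N:ℝ) * δ → |t| < (M:ℝ) * δ →
      (N:ℝ) * φ (t / N) = (M:ℝ) * φ (t / M) := by
    have key : ∀ (t : ℝ) (N M : ℕ), 0 < N → 0 < M → |t| < (N:ℝ) * δ →
        (N:ℝ) * φ (t / N) = ((N * M : ℕ):ℝ) * φ (t / (N * M : ℕ)) := by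
      intro t N M hN hM ht
      have hNne : (N:ℝ) ≠ 0 := Nat.cast_ne_zero.mpr hN.ne'
      have hMne : (M:ℝ) ≠ 0 := Nat.cast_ne_zero.mpr hM.ne'
      have habs : |t / N| < δ := by
        rw [abs_div, abs_of_nonneg (by positivity : (0:ℝ) ≤ (N:ℝ)), div_lt_iff₀ (by positivity)]
        linarith [ht]
      have h2 : |(M:ℝ) * (t / (N * M : ℕ))| < δ := by
        have : (M:ℝ) * (t / (N * M : ℕ)) = t / N := by push_cast; field_simp
        rw [this]; exact habs
      have h3 : |t / (N * M : ℕ)| < δ := by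
        have hle : |t / (N * M : ℕ)| ≤ |(M:ℝ) * (t / (N * M : ℕ))| := by
          rw [abs_mul]
          nth_rewrite 1 [← one_mul (|t / (N * M : ℕ)|)]
          gcongr
          rw [abs_of_nonneg (by positivity : (0:ℝ) ≤ (M:ℝ))]
          exact_mod_cast hM
        exact lt_of_le_of_lt hle h2
      have h4 := hscale M (t / (N * M : ℕ)) h2 h3
      have h5 : (M:ℝ) * (t / (N * M : ℕ)) = t / N := by push_cast; field_simp
      rw [h5] at h4
      rw [h4]; push_cast; ring
    intro t N M hN hM htN htM
    have h1 := key t N M hN hM htN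
    have h2 := key t M N hM hN htM
    rw [Nat.mul_comm M N] at h2
    rw [h1, h2]
  -- definition of g
  set g : ℝ → ℝ := fun t => ((hex t).choose : ℝ) * φ (t / (hex t).choose) with hg
  have hgeq : ∀ (t : ℝ) (N : ℕ), 0 < N → |t| < (N:ℝ) * δ → g t = (N:ℝ) * φ (t / N) := by
    intro t N hN ht
    exact wd t (hex t).choose N (hex t).choose_spec.1 hN (hex t).choose_spec.2 ht
  have hgadd : ∀ s t : ℝ, g (s + t) = g s + g t := by
    intro s t
    obtain ⟨N, hN, hsN⟩ := hex s
    obtain ⟨M, hM, htM⟩ := hex t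
    set L : ℕ := N + M with hL
    have hLpos : 0 < L := by omega
    have hsL : |s| < (L:ℝ) * δ := by
      refine lt_of_lt_of_le hsN ?_
      have : (N:ℝ) ≤ (L:ℝ) := by exact_mod_cast Nat.le_add_right N M
      nlinarith [hδpos]
    have htL : |t| < (L:ℝ) * δ := by
      refine lt_of_lt_of_le htM ?_
      have : (M:ℝ) ≤ (L:ℝ) := by exact_mod_cast Nat.le_add_left M N
      nlinarith [hδpos]
    have hstL : |s + t| < ((L:ℝ)) * δ := by
      calc |s + t| ≤ |s| + |t| := abs_add_le s t
        _ < (N:ℝ) * δ + (M:ℝ) * δ := by linarith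
        _ = (L:ℝ) * δ := by push_cast [hL]; ring
    have hLne : (L:ℝ) ≠ 0 := Nat.cast_ne_zero.mpr hLpos.ne'
    have e1 : |s / L| < δ := by
      rw [abs_div, abs_of_nonneg (by positivity : (0:ℝ) ≤ (L:ℝ)), div_lt_iff₀ (by positivity)]
      linarith
    have e2 : |t / L| < δ := by
      rw [abs_div, abs_of_nonneg (by positivity : (0:ℝ) ≤ (L:ℝ)), div_lt_iff₀ (by positivity)]
      linarith
    have e3 : |s / L + t / L| < δ := by
      rw [← add_div, abs_div, abs_of_nonneg (by positivity : (0:ℝ) ≤ (L:ℝ)),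
        div_lt_iff₀ (by positivity)]
      linarith
    rw [hgeq (s+t) L hLpos hstL, hgeq s L hLpos hsL, hgeq t L hLpos htL]
    have : (s + t) / L = s / L + t / L := by ring
    rw [this, hadd _ _ e1 e2 e3]
    ring
  have hgloc : ∀ t : ℝ, |t| < δ → g t = φ t := by
    intro t ht
    have := hgeq t 1 Nat.one_pos (by rw [Nat.cast_one, one_mul]; exact ht)
    rw [this, Nat.cast_one, one_mul, div_one]
  have hgq : ∀ t : ℝ, realToCircle (g t) = h t := by
    intro t
    obtain ⟨N, hN, htN⟩ := hex t
    rw [hgeq t N hN htN, realToCircle_coe]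
    have h1 : ((N:ℝ) * φ (t / N) : ℝ) = (N : ℕ) • (φ (t / N)) := by
      rw [nsmul_eq_mul]
    rw [h1]
    have h2 : (((N:ℕ) • (φ (t / N)) : ℝ) : AddCircle (1:ℝ)) = (N:ℕ) • ((φ (t/N) : ℝ) : AddCircle (1:ℝ)) := by
      push_cast; norm_cast
    rw [h2, hφcoe]
    rw [← map_nsmul h]
    congr 1
    rw [nsmul_eq_mul]
    field_simp
  -- build the hom
  set G : ℝ →+ ℝ := AddMonoidHom.mk' g hgadd with hG
  have hg0 : g 0 = 0 := by rw [hgloc 0 (by simpa using hδpos), hφ0]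
  have hGcont : Continuous G := by
    apply continuous_of_continuousAt_zero G
    have : ContinuousAt φ 0 := hφcont0
    apply this.congr
    filter_upwards [Metric.ball_mem_nhds (0:ℝ) hδpos] with t ht
    exact (hgloc t (by simpa [Real.dist_eq] using ht)).symm
  exact ⟨⟨G, hGcont⟩, hgq⟩

lemma compact_hom_to_real_eq_zero {K : Type*} [TopologicalSpace K] [AddCommGroup K]
    [IsTopologicalAddGroup K] [CompactSpace K] (g : K →+ ℝ) (hg : Continuous g) (x : K) :
    g x = 0 := by
  by_contra hx
  have hb := (isCompact_range hg).isBounded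
  obtain ⟨M, hM⟩ := hb.subset_closedBall 0
  obtain ⟨n, hn⟩ := exists_nat_gt (M / |g x|)
  have h1 : g (n • x) ∈ Set.range g := ⟨_, rfl⟩
  have h2 := hM h1
  rw [map_nsmul, nsmul_eq_mul, Metric.mem_closedBall, dist_zero_right, Real.norm_eq_abs,
    abs_mul, Nat.abs_cast] at h2
  have hpos : 0 < |g x| := abs_pos.mpr hx
  rw [div_lt_iff₀ hpos] at hn
  linarith

/-- Let `C` be a locally compact Hausdorff abelian topological group with maximal
compact subgroup `C¹ = ker(|·| : C → ℝ)` such that `C ≅ C¹ × ℝ` topologically (and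
additively).  Then restriction to `C¹` induces an isomorphism
`Hom_cont(C, 𝕊¹)/image(Hom_cont(C, ℝ)) ≅ (C¹)^D = Hom_cont(C¹, 𝕊¹)`,
the Pontryagin dual of `C¹`. -/
theorem stmt19 {C : Type*} [TopologicalSpace C] [AddCommGroup C] [IsTopologicalAddGroup C]
    [LocallyCompactSpace C] [T2Space C]
    (v : C →+ ℝ) (hv : Continuous v)
    (C1 : AddSubgroup C) (hC1 : C1 = v.ker) (hcomp : IsCompact (C1 : Set C))
    (hmax : ∀ K : AddSubgroup C, IsCompact (K : Set C) → K ≤ C1)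
    (e : C ≃ₜ (C1 × ℝ)) (he : ∀ x y : C, e (x + y) = e x + e y) :
    ∃ Ψ : (ContinuousAddMonoidHom C (AddCircle (1 : ℝ)) ⧸ (pushToCircle C).range) ≃+
        ContinuousAddMonoidHom C1 (AddCircle (1 : ℝ)),
      ∀ f : ContinuousAddMonoidHom C (AddCircle (1 : ℝ)),
        Ψ (QuotientAddGroup.mk f) = f.comp (subInclusion C1) := by
  haveI : CompactSpace C1 := isCompact_iff_compactSpace.mp hcomp
  have he0 : e 0 = 0 := by
    have h1 := he 0 0
    rw [add_zero] at h1
    have h2 : e 0 + 0 = e 0 + e 0 := by rw [add_zero]; exact h1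
    exact (add_left_cancel h2).symm
  have hesymm_add : ∀ a b : C1 × ℝ, e.symm (a + b) = e.symm a + e.symm b := by
    intro a b
    apply e.injective
    rw [he, e.apply_symm_apply, e.apply_symm_apply, e.apply_symm_apply]
  have hsnd : ∀ x : C, x ∈ C1 → (e x).2 = 0 := by
    intro x hx
    set g : C1 →+ ℝ := AddMonoidHom.mk' (fun y => (e (y:C)).2) (by
      intro y z
      push_cast
      rw [he]
      rfl) with hgdef
    have hgc : Continuous g := (continuous_snd.comp e.continuous).comp continuous_subtype_val
    exact compact_hom_to_real_eq_zero g hgc ⟨x, hx⟩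
  set w : C →+ ℝ := AddMonoidHom.mk' (fun x => (e x).2) (by
    intro x y
    show (e (x + y)).2 = (e x).2 + (e y).2
    rw [he]; rfl) with hwdef
  have hwcont : Continuous w := continuous_snd.comp e.continuous
  have hker : IsCompact ((w.ker : AddSubgroup C) : Set C) := by
    have hset : ((w.ker : AddSubgroup C) : Set C)
        = e.symm '' ((Set.univ : Set C1) ×ˢ ({0} : Set ℝ)) := by
      ext x
      constructor
      · intro hx
        refine ⟨e x, ⟨Set.mem_univ _, ?_⟩, e.symm_apply_apply x⟩
        exact hx
      · rintro ⟨p, ⟨-, hp2⟩, rfl⟩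
        show (e (e.symm p)).2 = 0
        rw [e.apply_symm_apply]
        exact hp2
    rw [hset]
    exact (isCompact_univ.prod isCompact_singleton).image e.symm.continuous
  have hkerle : w.ker ≤ C1 := hmax _ hker
  have hmem0 : ∀ a : C1, e.symm ((a, 0) : C1 × ℝ) ∈ C1 := by
    intro a
    apply hkerle
    show (e (e.symm (a, 0))).2 = 0
    rw [e.apply_symm_apply]
  have hdec : ∀ x : C, x = e.symm ((e x).1, 0) + e.symm (0, (e x).2) := by
    intro x
    rw [← hesymm_add]
    have h1 : (((e x).1, (0:ℝ)) : C1 × ℝ) + ((0 : C1), (e x).2) = e x := by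
      rw [Prod.mk_add_mk, add_zero, zero_add]
    rw [h1, e.symm_apply_apply]
  -- the restriction homomorphism
  set R : ContinuousAddMonoidHom C (AddCircle (1:ℝ)) →+ ContinuousAddMonoidHom C1 (AddCircle (1:ℝ)) :=
    { toFun := fun f => f.comp (subInclusion C1),
      map_zero' := by ext x; rfl,
      map_add' := fun f g => by ext x; rfl } with hRdef
  have hRsurj : Function.Surjective R := by
    intro χ
    set φc : C1 → C1 := fun a => ⟨e.symm ((a, 0) : C1 × ℝ), hmem0 a⟩ with hφcdef
    have hφcont : Continuous φc :=
      Continuous.subtype_mk (e.symm.continuous.comp (continuous_id.prodMk continuous_const)) _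
    have hφadd : ∀ a b : C1, φc (a + b) = φc a + φc b := by
      intro a b
      apply Subtype.ext
      show e.symm ((a + b, 0) : C1 × ℝ) = e.symm ((a, 0) : C1 × ℝ) + e.symm ((b, 0) : C1 × ℝ)
      rw [← hesymm_add, Prod.mk_add_mk, add_zero]
    set f0 : C →+ AddCircle (1:ℝ) := AddMonoidHom.mk' (fun x => χ (φc (e x).1)) (by
      intro x y
      show χ (φc (e (x + y)).1) = χ (φc (e x).1) + χ (φc (e y).1)
      have h1 : (e (x + y)).1 = (e x).1 + (e y).1 := by rw [he]; rfl
      rw [h1, hφadd, map_add]) with hf0def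
    have hf0c : Continuous f0 :=
      (map_continuous χ).comp (hφcont.comp (continuous_fst.comp e.continuous))
    refine ⟨⟨f0, hf0c⟩, ?_⟩
    ext a
    show χ (φc (e (a:C)).1) = χ a
    congr 1
    apply Subtype.ext
    show (e.symm (((e (a:C)).1, 0) : C1 × ℝ) : C) = (a : C)
    have h1 : (((e (a:C)).1, (0:ℝ)) : C1 × ℝ) = e (a:C) := by
      have := hsnd (a:C) a.2
      exact Prod.ext rfl this.symm
    rw [h1, e.symm_apply_apply]
  have hrk : (pushToCircle C).range = R.ker := by
    ext f
    simp only [AddMonoidHom.mem_range, AddMonoidHom.mem_ker]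
    constructor
    · rintro ⟨g, rfl⟩
      ext a
      show realToCircle (g (a:C)) = 0
      have hz : g ((a:C)) = 0 := by
        set g1 : C1 →+ ℝ := (g.toAddMonoidHom).comp C1.subtype with hg1def
        have hg1 : Continuous g1 := (map_continuous g).comp continuous_subtype_val
        exact compact_hom_to_real_eq_zero g1 hg1 a
      rw [hz, map_zero]
    · intro hf
      have hfz : ∀ x : C, x ∈ C1 → f x = 0 := by
        intro x hx
        have h1 := DFunLike.congr_fun hf (⟨x, hx⟩ : C1)
        exact h1
      set h0 : ℝ →+ AddCircle (1:ℝ) := AddMonoidHom.mk' (fun t => f (e.symm ((0, t) : C1 × ℝ))) (by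
        intro s t
        show f (e.symm ((0, s + t) : C1 × ℝ)) = f (e.symm ((0, s) : C1 × ℝ)) + f (e.symm ((0, t) : C1 × ℝ))
        have h1 : ((0, s + t) : C1 × ℝ) = (0, s) + (0, t) := by
          rw [Prod.mk_add_mk, add_zero]
        rw [h1, hesymm_add, map_add]) with hh0def
      have hh0c : Continuous h0 :=
        (map_continuous f).comp (e.symm.continuous.comp (continuous_const.prodMk continuous_id))
      obtain ⟨G, hG⟩ := exists_lift ⟨h0, hh0c⟩
      refine ⟨G.comp ⟨w, hwcont⟩, ?_⟩
      ext x
      show realToCircle (G (w x)) = f x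
      rw [hG]
      show f (e.symm ((0, (e x).2) : C1 × ℝ)) = f x
      conv_rhs => rw [hdec x]
      rw [map_add, hfz _ (hmem0 (e x).1), zero_add]
  refine ⟨(QuotientAddGroup.quotientAddEquivOfEq hrk).trans
    (QuotientAddGroup.quotientKerEquivOfSurjective R hRsurj), ?_⟩
  intro f
  rfl
end
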